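/- Let w be an infinite partial word with infinitely many holes over an alphabet of size k ≥ 2. If ŵ is a completion of w such that p_w(n) ≤ p_ŵ(n) + C for all n > 0 and some constant C, then Sub(w) = Sub(ŵ) and hence p_w(n) = p_ŵ(n) for all n. -/

import Mathlib

open Set

variable {A : Type*}

/-- The full word `u` occurs at position `i` in the partial word `w`
(`none` is the hole symbol, compatible with every letter). -/
def Occurs (w : ℕ → Option A) (u : List A) (i : ℕ) : Prop :=
  ∀ j : Fin u.length, w (i + (j : ℕ)) = none ∨ w (i + (j : ℕ)) = some (u.get j)

/-- `u` is a subword of `w`: it occurs at some position. -/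
def IsSubword (w : ℕ → Option A) (u : List A) : Prop :=
  ∃ i, Occurs w u i

/-- `u` is a recurrent subword of `w`: it occurs at infinitely many positions. -/
def IsRecSubword (w : ℕ → Option A) (u : List A) : Prop :=
  {i | Occurs w u i}.Infinite

/-- Subword complexity: number of distinct full words of length `n`
that are subwords of `w`. -/
noncomputable def pcomp (w : ℕ → Option A) (n : ℕ) : ℕ :=
  {u : List A | u.length = n ∧ IsSubword w u}.ncard

/-- Number of recurrent subwords of length `n`. -/
noncomputable def rcomp (w : ℕ → Option A) (n : ℕ) : ℕ :=
  {u : List A | u.length = n ∧ IsRecSubword w u}.ncard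

/-- `w` is recurrent: every subword occurs infinitely often. -/
def Recurrent (w : ℕ → Option A) : Prop :=
  ∀ u : List A, IsSubword w u → IsRecSubword w u

/-- `w` is ultimately recurrent: some shift of `w` is recurrent. -/
def UltimatelyRecurrent (w : ℕ → Option A) : Prop :=
  ∃ p, Recurrent (fun i => w (i + p))

/-- `c` is a completion of `w`: it agrees with `w` at every non-hole position. -/
def IsCompletion (w : ℕ → Option A) (c : ℕ → A) : Prop :=
  ∀ i, ∀ a : A, w i = some a → c i = a

/-- `w` is uniformly recurrent: for every subword `u` there is a window size `m`
such that every factor of `w` of length `m` contains an occurrence of `u`. -/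
def UniformlyRecurrent (w : ℕ → Option A) : Prop :=
  ∀ u : List A, IsSubword w u →
    ∃ m, ∀ i, ∃ j, i ≤ j ∧ j + u.length ≤ i + m ∧ Occurs w u j

/-- Every factor of `w` of length `m` contains every length-`n` subword of `w`. -/
def GoodWindow (w : ℕ → Option A) (n m : ℕ) : Prop :=
  ∀ u : List A, u.length = n → IsSubword w u →
    ∀ i, ∃ j, i ≤ j ∧ j + n ≤ i + m ∧ Occurs w u j

/-- The recurrence function `R_w(n)`: the least window size `m` such that every
factor of length `m` contains every subword of length `n`. -/
noncomputable def Rfun (w : ℕ → Option A) (n : ℕ) : ℕ :=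
  sInf {m | GoodWindow w n m}

/-- `w` is ultimately periodic: from some position on, `w` is compatible with a
periodic sequence of letters. -/
def UltimatelyPeriodic (w : ℕ → Option A) : Prop :=
  ∃ N p, 0 < p ∧ ∃ a : ℕ → A, ∀ i, N ≤ i → w i = none ∨ w i = some (a (i % p))

lemma occurs_ofFn_iff {A : Type*} (w : ℕ → Option A) {N : ℕ} (g : Fin N → A) (i : ℕ) :
    Occurs w (List.ofFn g) i ↔
      ∀ j : Fin N, w (i + (j : ℕ)) = none ∨ w (i + (j : ℕ)) = some (g j) := by
  constructor
  · intro h j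
    have := h (Fin.cast (List.length_ofFn (f := g)).symm j)
    simpa [List.get_ofFn, Occurs] using this
  · intro h j
    have := h (Fin.cast (List.length_ofFn (f := g)) j)
    simpa [List.get_ofFn, Occurs, Fin.cast] using this

theorem stmt19 [Fintype A] (hk : 2 ≤ Fintype.card A) (w : ℕ → Option A)
    (hinf : {i | w i = none}.Infinite) (c : ℕ → A) (hc : IsCompletion w c)
    (C : ℕ) (hC : ∀ n > 0, pcomp w n ≤ pcomp (fun i => some (c i)) n + C) :
    (∀ u : List A, IsSubword w u ↔ IsSubword (fun i => some (c i)) u) ∧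
      ∀ n, pcomp w n = pcomp (fun i => some (c i)) n := by
  classical
  obtain ⟨a, b, hab⟩ : ∃ a b : A, a ≠ b :=
    Fintype.exists_pair_of_one_lt_card (by omega)
  -- completions' subwords are subwords of w
  have hsub : ∀ u : List A, IsSubword (fun i => some (c i)) u → IsSubword w u := by
    rintro u ⟨p, hp⟩
    refine ⟨p, fun j => ?_⟩
    rcases h : w (p + (j : ℕ)) with _ | x
    · exact Or.inl rfl
    · right
      rcases hp j with h1 | h1
      · exact absurd h1 (by simp)
      · simp only [Option.some.injEq] at h1
        rw [← hc _ _ h, h1]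
  -- the main direction
  have hmain : ∀ u : List A, IsSubword w u → IsSubword (fun i => some (c i)) u := by
    intro u hu
    by_contra hnu
    obtain ⟨i, hi⟩ := hu
    have hPinf : (setOf fun m => w m = none).Infinite := hinf
    obtain ⟨H, hH⟩ : ∃ H : ℕ → ℕ,
        H = fun s => Nat.nth (fun m => w m = none) (i + u.length + s) := ⟨_, rfl⟩
    have hHmono : ∀ s t, s < t → H s < H t := fun s t hst => by
      rw [hH]; exact Nat.nth_strictMono hPinf (by omega)
    have hHge : ∀ s, i + u.length + s ≤ H s := fun s => by
      rw [hH]; exact (Nat.nth_strictMono hPinf).le_apply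
    have hHnone : ∀ s, w (H s) = none := fun s => by
      rw [hH]; exact Nat.nth_mem_of_infinite hPinf _
    have hHinj : Function.Injective H := by
      intro s t hst
      rw [hH] at hst
      have := (Nat.nth_injective hPinf) hst
      omega
    obtain ⟨N, hN⟩ : ∃ N : ℕ, N = H C + 1 - i := ⟨_, rfl⟩
    have hiN : i + N = H C + 1 := by have := hHge C; omega
    have hnN : u.length + 1 ≤ N := by have := hHge C; omega
    -- letters of the fabricated words
    obtain ⟨L, hL⟩ : ∃ L : (Fin C → Bool) → ℕ → A,
        L = fun f j =>
          if hj : j < u.length then u.get ⟨j, hj⟩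
          else if hs : ∃ s : Fin C, H s = i + j then cond (f hs.choose) a b
          else (w (i + j)).getD a := ⟨_, rfl⟩
    have hHlt : ∀ s : Fin C, H s - i < N := by
      intro s
      have h1 : H (s : ℕ) < H C := hHmono _ _ s.2
      have h2 := hHge (s : ℕ)
      omega
    have hHgei : ∀ s : Fin C, i + u.length ≤ H (s : ℕ) := fun s => by
      have := hHge (s : ℕ); omega
    have hLH : ∀ f (s : Fin C), L f (H (s : ℕ) - i) = cond (f s) a b := by
      intro f s
      have h2 := hHgei s
      have hj : ¬ (H (s : ℕ) - i < u.length) := by omega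
      have hs : ∃ t : Fin C, H (t : ℕ) = i + (H (s : ℕ) - i) := ⟨s, by omega⟩
      rw [hL]
      simp only [dif_neg hj, dif_pos hs]
      have hspec := hs.choose_spec
      have h3 : H ((hs.choose : Fin C) : ℕ) = H (s : ℕ) := by omega
      have heq : (hs.choose : Fin C) = s := Fin.ext (hHinj h3)
      rw [heq]
    have hLu : ∀ f j (hj : j < u.length), L f j = u.get ⟨j, hj⟩ := by
      intro f j hj
      rw [hL]; simp only [dif_pos hj]
    -- the fabricated words
    obtain ⟨v, hv⟩ : ∃ v : (Fin C → Bool) → List A,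
        v = fun f => List.ofFn (fun j : Fin N => L f (j : ℕ)) := ⟨_, rfl⟩
    have hvlen : ∀ f, (v f).length = N := by
      intro f; rw [hv]; exact List.length_ofFn
    -- each v f occurs in w at i
    have hocc : ∀ f, Occurs w (v f) i := by
      intro f
      rw [hv, occurs_ofFn_iff]
      intro j
      by_cases hj : (j : ℕ) < u.length
      · rw [hLu f _ hj]
        exact hi ⟨(j : ℕ), hj⟩
      · by_cases hs : ∃ s : Fin C, H (s : ℕ) = i + (j : ℕ)
        · obtain ⟨s, hseq⟩ := hs
          left; rw [← hseq]; exact hHnone (s : ℕ)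
        · rcases hw : w (i + (j : ℕ)) with _ | x
          · exact Or.inl rfl
          · right
            rw [hL]; simp only [dif_neg hj, dif_neg hs, hw, Option.getD_some]
    -- injectivity
    have hinj : Function.Injective v := by
      intro f g hfg
      funext s
      rw [hv] at hfg
      simp only [List.ofFn_inj] at hfg
      have h2 := congrFun hfg ⟨H (s : ℕ) - i, hHlt s⟩
      simp only at h2
      rw [hLH f s, hLH g s] at h2
      cases hfs : f s <;> cases hgs : g s <;> rw [hfs, hgs] at h2 <;> simp at h2 <;>
        first | rfl | exact absurd h2 hab | exact absurd h2.symm hab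
    -- no v f is a subword of the completion
    have hpre : ∀ f, ¬ IsSubword (fun i => some (c i)) (v f) := by
      rintro f ⟨q, hq⟩
      apply hnu
      rw [hv] at hq
      rw [occurs_ofFn_iff] at hq
      refine ⟨q, fun j => ?_⟩
      have hjN : (j : ℕ) < N := by have := j.2; omega
      have h1 := hq ⟨(j : ℕ), hjN⟩
      simp only at h1
      rcases h1 with h1 | h1
      · exact absurd h1 (by simp)
      · right
        rw [hLu f _ j.2] at h1
        exact h1
    -- counting
    set S : Set (List A) := {l : List A | l.length = N ∧ IsSubword w l} with hS
    set T : Set (List A) :=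
      {l : List A | l.length = N ∧ IsSubword (fun i => some (c i)) l} with hT
    have hSfin : S.Finite := (List.finite_length_eq A N).subset (fun l hl => hl.1)
    have hTS : T ⊆ S := fun l hl => ⟨hl.1, hsub l hl.2⟩
    have hES : Set.range v ⊆ S := by
      rintro l ⟨f, rfl⟩
      exact ⟨hvlen f, ⟨i, hocc f⟩⟩
    have hdisj : Disjoint T (Set.range v) := by
      rw [Set.disjoint_left]
      rintro l hlT ⟨f, rfl⟩
      exact hpre f hlT.2
    have hEcard : (Set.range v).ncard = 2 ^ C := by
      rw [← Nat.card_coe_set_eq, Nat.card_range_of_injective hinj]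
      simp [Nat.card_eq_fintype_card]
    have hone : T.ncard + (Set.range v).ncard ≤ S.ncard := by
      rw [← Set.ncard_union_eq hdisj (hSfin.subset hTS) (hSfin.subset hES)]
      exact Set.ncard_le_ncard (Set.union_subset hTS hES) hSfin
    have h2C : C < 2 ^ C := Nat.lt_two_pow_self
    have hbound := hC N (by omega)
    have hpw : pcomp w N = S.ncard := rfl
    have hpc : pcomp (fun i => some (c i)) N = T.ncard := rfl
    rw [hpw, hpc] at hbound
    omega
  refine ⟨fun u => ⟨hmain u, hsub u⟩, fun n => ?_⟩
  unfold pcomp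
  congr 1
  ext l
  exact and_congr_right fun _ => ⟨hmain l, hsub l⟩
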